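/- Let μ be a probability measure on ℝ with compact support, let a ≠ 0 and σ > 0, and define p(x) = ∫ φ(x; a u, σ²) dμ(u). Then p(x) > 0 for every x ∈ ℝ, p is differentiable, and with m(x) = (∫ u · φ(x; a u, σ²) dμ(u)) / p(x) one has (log p)'(x) = (a · m(x) − x)/σ²; equivalently, the posterior mean satisfies m(x) = (x + σ² (log p)'(x))/a (Tweedie's formula). -/

import Mathlib

open MeasureTheory

/-- The Gaussian probability density with mean `m` and variance `τ2`. -/
noncomputable def gaussPDF (x m τ2 : ℝ) : ℝ :=
  (Real.sqrt (2 * Real.pi * τ2))⁻¹ * Real.exp (-((x - m) ^ 2) / (2 * τ2))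

lemma gaussPDF_pos (x m τ2 : ℝ) (hτ : 0 < τ2) : 0 < gaussPDF x m τ2 := by
  have h : 0 < Real.sqrt (2 * Real.pi * τ2) := Real.sqrt_pos.2 (by positivity)
  exact mul_pos (inv_pos.2 h) (Real.exp_pos _)

lemma gaussPDF_le (x m τ2 : ℝ) (hτ : 0 < τ2) :
    gaussPDF x m τ2 ≤ (Real.sqrt (2 * Real.pi * τ2))⁻¹ := by
  have h : Real.exp (-((x - m) ^ 2) / (2 * τ2)) ≤ 1 := by
    apply Real.exp_le_one_iff.2
    exact div_nonpos_of_nonpos_of_nonneg (neg_nonpos.2 (sq_nonneg _)) (by positivity)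
  have h2 : (0:ℝ) ≤ (Real.sqrt (2 * Real.pi * τ2))⁻¹ := by positivity
  calc gaussPDF x m τ2 ≤ (Real.sqrt (2 * Real.pi * τ2))⁻¹ * 1 :=
        mul_le_mul_of_nonneg_left h h2
    _ = _ := mul_one _

lemma hasDerivAt_gaussPDF (m τ2 : ℝ) (hτ : τ2 ≠ 0) (x : ℝ) :
    HasDerivAt (fun y => gaussPDF y m τ2) (gaussPDF x m τ2 * ((m - x) / τ2)) x := by
  have h1 : HasDerivAt (fun y => -((y - m) ^ 2) / (2 * τ2)) ((m - x) / τ2) x := by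
    have h0 : HasDerivAt (fun y : ℝ => (y - m) ^ 2) (2 * (x - m)) x := by
      simpa using ((hasDerivAt_id x).sub_const m).fun_pow 2
    have := (h0.neg).div_const (2 * τ2)
    refine HasDerivAt.congr_deriv this ?_
    field_simp
    ring
  have h2 := (Real.hasDerivAt_exp _).comp x h1
  have h3 := h2.const_mul ((Real.sqrt (2 * Real.pi * τ2))⁻¹)
  simp only [gaussPDF, Function.comp] at h3 ⊢
  refine HasDerivAt.congr_deriv h3 ?_
  ring

theorem tweedie_formula
    (μ : Measure ℝ) [IsProbabilityMeasure μ]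
    (K : Set ℝ) (hK : IsCompact K) (hμK : μ Kᶜ = 0)
    (a σ : ℝ) (ha : a ≠ 0) (hσ : 0 < σ)
    (p : ℝ → ℝ) (hp : ∀ x, p x = ∫ u, gaussPDF x (a * u) (σ ^ 2) ∂μ) :
    (∀ x, 0 < p x) ∧ Differentiable ℝ p ∧
    (∀ x, deriv (fun y => Real.log (p y)) x
        = (a * ((∫ u, u * gaussPDF x (a * u) (σ ^ 2) ∂μ) / p x) - x) / σ ^ 2) ∧
    (∀ x, (∫ u, u * gaussPDF x (a * u) (σ ^ 2) ∂μ) / p x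
        = (x + σ ^ 2 * deriv (fun y => Real.log (p y)) x) / a) := by
  have hτ : (0:ℝ) < σ ^ 2 := by positivity
  set C : ℝ := (Real.sqrt (2 * Real.pi * σ ^ 2))⁻¹ with hC
  have hCpos : 0 < C := by positivity
  -- a.e. membership in K
  have haeK : ∀ᵐ u ∂μ, u ∈ K := by
    rw [MeasureTheory.ae_iff]
    exact hμK
  obtain ⟨R, hR⟩ : ∃ R : ℝ, ∀ u ∈ K, |u| ≤ R := by
    obtain ⟨R, hR⟩ := hK.isBounded.subset_ball 0
    exact ⟨R, fun u hu => by simpa [Real.dist_eq] using (Metric.mem_ball.1 (hR hu)).le⟩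
  -- continuity/measurability in u
  have hcont : ∀ x : ℝ, Continuous fun u => gaussPDF x (a * u) (σ ^ 2) := by
    intro x
    unfold gaussPDF
    fun_prop
  -- integrability of the kernel
  have hint : ∀ x : ℝ, Integrable (fun u => gaussPDF x (a * u) (σ ^ 2)) μ := by
    intro x
    apply Integrable.mono' (integrable_const C) (hcont x).aestronglyMeasurable
    filter_upwards with u
    rw [Real.norm_eq_abs, abs_of_pos (gaussPDF_pos _ _ _ hτ)]
    exact gaussPDF_le _ _ _ hτ
  -- integrability of u * kernel
  have hint1 : ∀ x : ℝ, Integrable (fun u => u * gaussPDF x (a * u) (σ ^ 2)) μ := by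
    intro x
    apply Integrable.mono' (integrable_const (R * C))
      ((continuous_id.mul (hcont x)).aestronglyMeasurable)
    filter_upwards [haeK] with u hu
    rw [Real.norm_eq_abs, Pi.mul_apply, id_eq, abs_mul, abs_of_pos (gaussPDF_pos _ _ _ hτ)]
    exact mul_le_mul (hR u hu) (gaussPDF_le _ _ _ hτ) (gaussPDF_pos _ _ _ hτ).le
      ((abs_nonneg u).trans (hR u hu))
  -- positivity of p
  have hppos : ∀ x, 0 < p x := by
    intro x
    rw [hp x]
    have := (integral_pos_iff_support_of_nonneg
      (fun u => (gaussPDF_pos x (a * u) (σ ^ 2) hτ).le) (hint x))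
    rw [this]
    have hsupp : Function.support (fun u => gaussPDF x (a * u) (σ ^ 2)) = Set.univ := by
      ext u; simp [Function.mem_support, (gaussPDF_pos x (a * u) (σ ^ 2) hτ).ne']
    rw [hsupp]
    simp
  -- derivative of p
  have hD : ∀ x : ℝ, HasDerivAt p
      ((a * (∫ u, u * gaussPDF x (a * u) (σ ^ 2) ∂μ) - x * p x) / σ ^ 2) x := by
    intro x₀
    have key := hasDerivAt_integral_of_dominated_loc_of_deriv_le (μ := μ)
      (F := fun x u => gaussPDF x (a * u) (σ ^ 2))
      (F' := fun x u => gaussPDF x (a * u) (σ ^ 2) * ((a * u - x) / σ ^ 2))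
      (x₀ := x₀) (s := Metric.ball x₀ 1)
      (bound := fun _ => C * ((|a| * R + (|x₀| + 1)) / σ ^ 2))
      (Metric.ball_mem_nhds x₀ one_pos)
      (Filter.Eventually.of_forall fun x => (hcont x).aestronglyMeasurable)
      (hint x₀)
      (Continuous.aestronglyMeasurable (by unfold gaussPDF; fun_prop))
      ?_ (integrable_const _) ?_
    · have h2 : HasDerivAt p (∫ u, gaussPDF x₀ (a * u) (σ ^ 2) * ((a * u - x₀) / σ ^ 2) ∂μ) x₀ := by
        have := key.2
        have heq : p = fun x => ∫ u, gaussPDF x (a * u) (σ ^ 2) ∂μ := funext hp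
        rw [heq]
        exact this
      convert h2 using 1
      have : (fun u => gaussPDF x₀ (a * u) (σ ^ 2) * ((a * u - x₀) / σ ^ 2))
          = fun u => (a / σ ^ 2) * (u * gaussPDF x₀ (a * u) (σ ^ 2))
            - (x₀ / σ ^ 2) * gaussPDF x₀ (a * u) (σ ^ 2) := by
        ext u; field_simp
      rw [this, integral_sub (((hint1 x₀).const_mul _)) ((hint x₀).const_mul _),
        integral_const_mul, integral_const_mul, hp x₀]
      ring
    · -- bound
      filter_upwards [haeK] with u hu x hx
      rw [Real.norm_eq_abs, abs_mul, abs_of_pos (gaussPDF_pos _ _ _ hτ), abs_div,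
        abs_of_pos hτ]
      have h1 : |a * u - x| ≤ |a| * R + (|x₀| + 1) := by
        have hx' : |x - x₀| < 1 := by simpa [Real.dist_eq] using Metric.mem_ball.1 hx
        have : |x| ≤ |x₀| + 1 := by
          have := abs_sub_abs_le_abs_sub x x₀
          linarith
        calc |a * u - x| ≤ |a * u| + |x| := abs_sub _ _
          _ ≤ |a| * R + (|x₀| + 1) := by
              rw [abs_mul]
              have := hR u hu
              have hanon : (0:ℝ) ≤ |a| := abs_nonneg a
              nlinarith [abs_nonneg u]
      exact mul_le_mul (gaussPDF_le _ _ _ hτ) (by gcongr) (by positivity) hCpos.le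
    · -- differentiability
      filter_upwards with u x _
      exact hasDerivAt_gaussPDF (a * u) (σ ^ 2) hτ.ne' x
  have hdiff : Differentiable ℝ p := fun x => (hD x).differentiableAt
  -- log derivative
  have hlog : ∀ x, deriv (fun y => Real.log (p y)) x
      = (a * ((∫ u, u * gaussPDF x (a * u) (σ ^ 2) ∂μ) / p x) - x) / σ ^ 2 := by
    intro x
    have h := (Real.hasDerivAt_log (hppos x).ne').comp x (hD x)
    have h' : HasDerivAt (fun y => Real.log (p y))
        ((p x)⁻¹ * ((a * ∫ u, u * gaussPDF x (a * u) (σ ^ 2) ∂μ - x * p x) / σ ^ 2)) x := h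
    rw [h'.deriv]
    have hpx := (hppos x).ne'
    field_simp
  refine ⟨hppos, hdiff, hlog, fun x => ?_⟩
  rw [hlog x]
  have hpx := (hppos x).ne'
  field_simp
  ring
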